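/- If a real random variable Z is symmetric (i.e., Z and −Z have the same distribution) and bounded, then for all λ ∈ ℝ, E[exp(λZ)] ≤ E[exp(λ²Z²/2)]. -/

import Mathlib

open MeasureTheory in
/-- Symmetrization: if `Z` is a symmetric, bounded real random variable, then for all
`λ ∈ ℝ`, `E[exp(λ Z)] ≤ E[exp(λ² Z² / 2)]`. -/
theorem stmt14 {Ω : Type*} [MeasurableSpace Ω] (μ : Measure Ω) [IsProbabilityMeasure μ]
    (Z : Ω → ℝ) (hZ : Measurable Z)
    (hsymm : Measure.map Z μ = Measure.map (fun ω => -Z ω) μ)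
    (hbdd : ∃ C : ℝ, ∀ ω, |Z ω| ≤ C) :
    ∀ l : ℝ, ∫ ω, Real.exp (l * Z ω) ∂μ ≤ ∫ ω, Real.exp (l ^ 2 * Z ω ^ 2 / 2) ∂μ := by
  obtain ⟨C, hC⟩ := hbdd
  intro l
  -- generic integrability of exp(a Z + b Z²)
  have key : ∀ a b : ℝ, Integrable (fun ω => Real.exp (a * Z ω + b * Z ω ^ 2)) μ := by
    intro a b
    apply Integrable.mono' (integrable_const (Real.exp (|a| * C + |b| * C ^ 2)))
    · exact (((hZ.const_mul a).add ((hZ.pow_const 2).const_mul b)).exp).aestronglyMeasurable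
    · filter_upwards with ω
      rw [Real.norm_eq_abs, Real.abs_exp]
      apply Real.exp_le_exp.2
      have h0 := abs_nonneg (Z ω)
      have h1 : a * Z ω ≤ |a| * C := by
        calc a * Z ω ≤ |a * Z ω| := le_abs_self _
          _ = |a| * |Z ω| := abs_mul _ _
          _ ≤ |a| * C := by exact mul_le_mul_of_nonneg_left (hC ω) (abs_nonneg a)
      have h2 : b * Z ω ^ 2 ≤ |b| * C ^ 2 := by
        have h3 : Z ω ^ 2 ≤ C ^ 2 := by nlinarith [hC ω, sq_abs (Z ω)]
        calc b * Z ω ^ 2 ≤ |b * Z ω ^ 2| := le_abs_self _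
          _ = |b| * Z ω ^ 2 := by rw [abs_mul, abs_of_nonneg (sq_nonneg (Z ω))]
          _ ≤ |b| * C ^ 2 := mul_le_mul_of_nonneg_left h3 (abs_nonneg b)
      linarith
  have hintpos : Integrable (fun ω => Real.exp (l * Z ω)) μ := by
    simpa using key l 0
  have hintneg : Integrable (fun ω => Real.exp (-(l * Z ω))) μ := by
    simpa [neg_mul] using key (-l) 0
  have hintsq : Integrable (fun ω => Real.exp (l ^ 2 * Z ω ^ 2 / 2)) μ := by
    have := key 0 (l ^ 2 / 2)
    simp only [zero_mul, zero_add] at this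
    convert this using 2 with ω
    ring
  -- symmetry: E[exp(lZ)] = E[exp(-lZ)]
  have hmap : ∫ ω, Real.exp (l * Z ω) ∂μ = ∫ ω, Real.exp (-(l * Z ω)) ∂μ := by
    have hc : Continuous fun x : ℝ => Real.exp (l * x) := by continuity
    have h1 : ∫ ω, Real.exp (l * Z ω) ∂μ = ∫ x, Real.exp (l * x) ∂(Measure.map Z μ) :=
      (integral_map hZ.aemeasurable hc.aestronglyMeasurable).symm
    rw [h1, hsymm, integral_map (φ := fun ω => -Z ω) hZ.neg.aemeasurable hc.aestronglyMeasurable]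
    simp [mul_neg]
  -- E[exp(lZ)] = E[cosh(lZ)]
  have hcosh : ∫ ω, Real.exp (l * Z ω) ∂μ = ∫ ω, Real.cosh (l * Z ω) ∂μ := by
    simp_rw [Real.cosh_eq]
    rw [integral_div, integral_add hintpos hintneg, ← hmap]
    ring
  have hintcosh : Integrable (fun ω => Real.cosh (l * Z ω)) μ := by
    simp_rw [Real.cosh_eq]
    exact (hintpos.add hintneg).div_const 2
  rw [hcosh]
  refine integral_mono hintcosh hintsq fun ω => ?_
  have := Real.cosh_le_exp_half_sq (l * Z ω)
  simpa [mul_pow] using this
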